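/- Let f = h·conj(g) be a sense-preserving logharmonic mapping in 𝔻 with dilatation ω = g'h/(gh'), and let ψ be analytic with ψ' = h'g. Define the pre-Schwarzian derivatives P_f = h''/h' + g'/g − ω̄ω'/(1−|ω|²) and P_ψ = ψ''/ψ' and their norms ‖P‖ = sup_{z∈𝔻}(1−|z|²)|P(z)|. Then ‖P_f‖ is finite if and only if ‖P_ψ‖ is finite, and if finite, | ‖P_f‖ − ‖P_ψ‖ | ≤ 1. -/

import Mathlib

open Complex Metric Set

/-- The open unit disk. -/
def unitDisk : Set ℂ := Metric.ball 0 1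

/-- Pre-Schwarzian derivative of an analytic function. -/
noncomputable def preSch (F : ℂ → ℂ) : ℂ → ℂ := fun z => deriv (deriv F) z / deriv F z

/-- Pre-Schwarzian derivative of the logharmonic mapping `f = h ⬝ conj g` with dilatation `ω`. -/
noncomputable def logPreSch (h g ω : ℂ → ℂ) : ℂ → ℂ := fun z =>
  deriv (deriv h) z / deriv h z + deriv g z / g z -
    (starRingEnd ℂ) (ω z) * deriv ω z / ((1 - ‖ω z‖ ^ 2 : ℝ) : ℂ)

/-- The set of values `(1 - |z|²)|P z|` for `z` in the unit disk; its supremum is the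
pre-Schwarzian norm and its boundedness expresses finiteness of the norm. -/
def normSet (P : ℂ → ℂ) : Set ℝ :=
  {r | ∃ z ∈ unitDisk, r = (1 - ‖z‖ ^ 2) * ‖P z‖}


noncomputable def moebius (w z : ℂ) : ℂ := (z - w) / (1 - (starRingEnd ℂ) w * z)

lemma moebius_den_ne {w z : ℂ} (hw : ‖w‖ < 1) (hz : ‖z‖ < 1) :
    1 - (starRingEnd ℂ) w * z ≠ 0 := by
  intro hc
  have : ‖(starRingEnd ℂ) w * z‖ < 1 := by
    rw [norm_mul, RCLike.norm_conj]
    nlinarith [norm_nonneg w, norm_nonneg z]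
  have h1 : (1 : ℂ) = (starRingEnd ℂ) w * z := by linear_combination hc
  rw [← h1] at this; simp at this

lemma normSq_key (w z : ℂ) :
    normSq (1 - (starRingEnd ℂ) w * z) - normSq (z - w)
      = (1 - normSq w) * (1 - normSq z) := by
  simp [normSq_apply]; ring

lemma moebius_mapsTo {w : ℂ} (hw : ‖w‖ < 1) :
    MapsTo (moebius w) (ball 0 1) (ball 0 1) := by
  intro z hz
  rw [mem_ball_zero_iff] at hz ⊢
  have hden := moebius_den_ne hw hz
  have hdpos : (0:ℝ) < ‖1 - (starRingEnd ℂ) w * z‖ := norm_pos_iff.mpr hden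
  rw [moebius, norm_div, div_lt_one hdpos]
  have h1 : normSq w < 1 := by
    rw [normSq_eq_norm_sq]; nlinarith [norm_nonneg w]
  have h2 : normSq z < 1 := by
    rw [normSq_eq_norm_sq]; nlinarith [norm_nonneg z]
  have hk := normSq_key w z
  have h3 : normSq (z - w) < normSq (1 - (starRingEnd ℂ) w * z) := by nlinarith
  calc ‖z - w‖ = Real.sqrt (normSq (z - w)) := by
        rw [Complex.norm_def]
    _ < Real.sqrt (normSq (1 - (starRingEnd ℂ) w * z)) :=
        Real.sqrt_lt_sqrt (normSq_nonneg _) h3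
    _ = ‖1 - (starRingEnd ℂ) w * z‖ := by rw [Complex.norm_def]

lemma moebius_hasDerivAt {w z : ℂ} (hden : 1 - (starRingEnd ℂ) w * z ≠ 0) :
    HasDerivAt (moebius w) ((1 - (starRingEnd ℂ) w * w) / (1 - (starRingEnd ℂ) w * z) ^ 2) z := by
  have h1 : HasDerivAt (fun z : ℂ => z - w) 1 z := (hasDerivAt_id z).sub_const w
  have h2 : HasDerivAt (fun z : ℂ => 1 - (starRingEnd ℂ) w * z) (-((starRingEnd ℂ) w)) z := by
    simpa using ((hasDerivAt_id z).const_mul ((starRingEnd ℂ) w)).const_sub 1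
  have := h1.div h2 hden
  have hm : moebius w = (fun z => z - w) / fun z => 1 - (starRingEnd ℂ) w * z := by
    funext y; rfl
  rw [hm]
  exact this.congr_deriv (by ring)

lemma moebius_diffOn {w : ℂ} (hw : ‖w‖ < 1) :
    DifferentiableOn ℂ (moebius w) (ball 0 1) := fun z hz =>
  ((moebius_hasDerivAt (moebius_den_ne hw (mem_ball_zero_iff.mp hz))).differentiableAt).differentiableWithinAt

/-- Schwarz–Pick. -/
lemma schwarz_pick {f : ℂ → ℂ} (hd : DifferentiableOn ℂ f (ball 0 1))
    (hm : MapsTo f (ball 0 1) (ball 0 1)) {a : ℂ} (ha : a ∈ ball 0 1) :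
    ‖deriv f a‖ * (1 - ‖a‖ ^ 2) ≤ 1 - ‖f a‖ ^ 2 := by
  set b := f a with hb
  have hab : ‖a‖ < 1 := mem_ball_zero_iff.mp ha
  have hbb : ‖b‖ < 1 := mem_ball_zero_iff.mp (hm ha)
  have hna : ‖(-a : ℂ)‖ < 1 := by simpa using hab
  -- the composite map
  set F : ℂ → ℂ := moebius b ∘ f ∘ moebius (-a) with hF
  have hm1 : MapsTo (moebius (-a)) (ball 0 1) (ball 0 1) := moebius_mapsTo hna
  have hfd2 : DifferentiableOn ℂ (f ∘ moebius (-a)) (ball 0 1) :=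
    hd.comp (moebius_diffOn hna) hm1
  have hFd : DifferentiableOn ℂ F (ball 0 1) :=
    (moebius_diffOn hbb).comp hfd2 (hm.comp hm1)
  have hFm : MapsTo F (ball 0 1) (ball 0 1) :=
    (moebius_mapsTo hbb).comp (hm.comp hm1)
  have h0 : moebius (-a) 0 = a := by simp [moebius]
  have hG : HasDerivAt (moebius (-a)) (1 - (starRingEnd ℂ) a * a) 0 := by
    have := moebius_hasDerivAt (w := -a) (z := 0) (by simp)
    simpa using this
  have hfa : HasDerivAt f (deriv f a) a :=
    (hd.differentiableAt (isOpen_ball.mem_nhds ha)).hasDerivAt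
  have hbden : 1 - (starRingEnd ℂ) b * b ≠ 0 := by
    rw [← normSq_eq_conj_mul_self]
    intro hc
    have : ((1 - normSq b : ℝ) : ℂ) = 0 := by push_cast; linear_combination hc
    have h2 : normSq b = 1 := by
      have := Complex.ofReal_eq_zero.mp this; linarith
    rw [normSq_eq_norm_sq] at h2
    nlinarith [norm_nonneg b]
  have hMb : HasDerivAt (moebius b)
      ((1 - (starRingEnd ℂ) b * b) / (1 - (starRingEnd ℂ) b * b) ^ 2) b :=
    moebius_hasDerivAt hbden
  have hcomp1 : HasDerivAt (f ∘ moebius (-a)) (deriv f a * (1 - (starRingEnd ℂ) a * a)) 0 := by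
    refine HasDerivAt.comp 0 ?_ hG
    rw [h0]; exact hfa
  have hcomp : HasDerivAt F
      ((1 - (starRingEnd ℂ) b * b) / (1 - (starRingEnd ℂ) b * b) ^ 2 *
        (deriv f a * (1 - (starRingEnd ℂ) a * a))) 0 := by
    refine HasDerivAt.comp 0 ?_ hcomp1
    have : (f ∘ moebius (-a)) 0 = b := by rw [Function.comp_apply, h0]
    rw [this]; exact hMb
  have hF0 : F 0 = 0 := by
    show moebius b ((f ∘ moebius (-a)) 0) = 0
    rw [Function.comp_apply, h0, ← hb, moebius]
    simp
  have hle : ‖deriv F 0‖ ≤ 1 :=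
    Complex.norm_deriv_le_one_of_mapsTo_ball hFd (by rw [hF0]; exact hFm.mono_right ball_subset_closedBall) one_pos
  rw [hcomp.deriv] at hle
  have hca : (1 : ℂ) - (starRingEnd ℂ) a * a = ((1 - ‖a‖ ^ 2 : ℝ) : ℂ) := by
    rw [← normSq_eq_conj_mul_self, normSq_eq_norm_sq]; push_cast; ring
  have hcb : (1 : ℂ) - (starRingEnd ℂ) b * b = ((1 - ‖b‖ ^ 2 : ℝ) : ℂ) := by
    rw [← normSq_eq_conj_mul_self, normSq_eq_norm_sq]; push_cast; ring
  have hnb : (0:ℝ) < 1 - ‖b‖ ^ 2 := by nlinarith [norm_nonneg b]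
  have hna' : (0:ℝ) < 1 - ‖a‖ ^ 2 := by nlinarith [norm_nonneg a]
  rw [hca, hcb] at hle
  have hnorm : ‖((1 - ‖b‖ ^ 2 : ℝ) : ℂ) / ((1 - ‖b‖ ^ 2 : ℝ) : ℂ) ^ 2 *
      (deriv f a * ((1 - ‖a‖ ^ 2 : ℝ) : ℂ))‖
      = ‖deriv f a‖ * (1 - ‖a‖ ^ 2) / (1 - ‖b‖ ^ 2) := by
    rw [norm_mul, norm_div, norm_mul, norm_pow]
    simp only [Complex.norm_real]
    rw [Real.norm_of_nonneg hnb.le, Real.norm_of_nonneg hna'.le]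
    rw [pow_two (1 - ‖b‖ ^ 2), div_mul_eq_div_div, div_self hnb.ne']
    ring
  rw [hnorm, div_le_one hnb] at hle
  linarith

lemma aux_bddAbove {P Q : ℂ → ℂ}
    (hcomp : ∀ z ∈ unitDisk, (1 - ‖z‖ ^ 2) * ‖P z‖ ≤ (1 - ‖z‖ ^ 2) * ‖Q z‖ + 1)
    (hv : BddAbove (normSet Q)) : BddAbove (normSet P) := by
  obtain ⟨M, hM⟩ := hv
  refine ⟨M + 1, ?_⟩
  rintro r ⟨z, hz, rfl⟩
  exact le_trans (hcomp z hz) (add_le_add_left (hM ⟨z, hz, rfl⟩) 1)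

lemma aux_sSup {P Q : ℂ → ℂ}
    (hcomp : ∀ z ∈ unitDisk, (1 - ‖z‖ ^ 2) * ‖P z‖ ≤ (1 - ‖z‖ ^ 2) * ‖Q z‖ + 1)
    (hv : BddAbove (normSet Q)) : sSup (normSet P) ≤ sSup (normSet Q) + 1 := by
  have h0 : (0:ℂ) ∈ unitDisk := by simp [unitDisk]
  have hmem : (1 - ‖(0:ℂ)‖ ^ 2) * ‖P 0‖ ∈ normSet P := ⟨0, h0, rfl⟩
  apply csSup_le ⟨_, hmem⟩
  rintro r ⟨z, hz, rfl⟩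
  exact le_trans (hcomp z hz) (add_le_add_left (le_csSup hv ⟨z, hz, rfl⟩) 1)

/-- Theorem 1: for a sense-preserving logharmonic mapping `f = h ⬝ conj g` with dilatation
`ω = g'h/(gh')` and `ψ` analytic with `ψ' = h'g`, the norms `‖P_f‖` and `‖P_ψ‖` are
simultaneously finite, and if finite `| ‖P_f‖ − ‖P_ψ‖ | ≤ 1`. -/
theorem logharmonic_preSchwarzian_vs_psi (h g ψ ω : ℂ → ℂ)
    (hh : DifferentiableOn ℂ h unitDisk) (hh' : DifferentiableOn ℂ (deriv h) unitDisk)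
    (hg : DifferentiableOn ℂ g unitDisk)
    (hψ : DifferentiableOn ℂ ψ unitDisk) (hψ' : DifferentiableOn ℂ (deriv ψ) unitDisk)
    (hne : ∀ z ∈ unitDisk, deriv h z * g z ≠ 0)
    (hωdef : ∀ z ∈ unitDisk, ω z = deriv g z * h z / (g z * deriv h z))
    (hωmap : ∀ z ∈ unitDisk, ω z ∈ unitDisk)
    (hψeq : ∀ z ∈ unitDisk, deriv ψ z = deriv h z * g z) :
    (BddAbove (normSet (logPreSch h g ω)) ↔ BddAbove (normSet (preSch ψ))) ∧
      (BddAbove (normSet (logPreSch h g ω)) →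
        |sSup (normSet (logPreSch h g ω)) - sSup (normSet (preSch ψ))| ≤ 1) := by
  have hD : IsOpen unitDisk := isOpen_ball
  have hg' : DifferentiableOn ℂ (deriv g) unitDisk :=
    ((hg.analyticOnNhd hD).deriv).differentiableOn
  -- ω is differentiable on the disk
  have hωdiff : DifferentiableOn ℂ ω unitDisk := by
    intro z hz
    have hzn : unitDisk ∈ nhds z := hD.mem_nhds hz
    have hden : g z * deriv h z ≠ 0 := by
      rw [mul_comm]; exact hne z hz
    have hd1 : DifferentiableAt ℂ (fun w => deriv g w * h w / (g w * deriv h w)) z :=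
      DifferentiableAt.div
        ((hg'.differentiableAt hzn).mul (hh.differentiableAt hzn))
        ((hg.differentiableAt hzn).mul (hh'.differentiableAt hzn)) hden
    have hEq : ω =ᶠ[nhds z] fun w => deriv g w * h w / (g w * deriv h w) :=
      Filter.eventuallyEq_of_mem hzn hωdef
    exact (hEq.differentiableAt_iff.mpr hd1).differentiableWithinAt
  -- pointwise identity and bound
  have hptw : ∀ z ∈ unitDisk,
      |(1 - ‖z‖ ^ 2) * ‖logPreSch h g ω z‖ - (1 - ‖z‖ ^ 2) * ‖preSch ψ z‖| ≤ 1 := by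
    intro z hz
    have hzn : unitDisk ∈ nhds z := hD.mem_nhds hz
    have hz1 : ‖z‖ < 1 := mem_ball_zero_iff.mp hz
    have hHne : deriv h z ≠ 0 := fun hc => hne z hz (by rw [hc, zero_mul])
    have hGne : g z ≠ 0 := fun hc => hne z hz (by rw [hc, mul_zero])
    -- preSch ψ z = h''/h' + g'/g
    have hEψ : deriv ψ =ᶠ[nhds z] fun w => deriv h w * g w :=
      Filter.eventuallyEq_of_mem hzn hψeq
    have hprod : HasDerivAt (fun w => deriv h w * g w)
        (deriv (deriv h) z * g z + deriv h z * deriv g z) z :=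
      ((hh'.differentiableAt hzn).hasDerivAt).mul ((hg.differentiableAt hzn).hasDerivAt)
    have hd2 : deriv (deriv ψ) z = deriv (deriv h) z * g z + deriv h z * deriv g z := by
      rw [hEψ.deriv_eq, hprod.deriv]
    have hpre : preSch ψ z = deriv (deriv h) z / deriv h z + deriv g z / g z := by
      rw [preSch, hd2, hψeq z hz]
      field_simp
    -- the correction term
    have hω1 : ‖ω z‖ < 1 := mem_ball_zero_iff.mp (hωmap z hz)
    have hωpos : (0:ℝ) < 1 - ‖ω z‖ ^ 2 := by nlinarith [norm_nonneg (ω z)]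
    have hdiffeq : logPreSch h g ω z - preSch ψ z
        = -((starRingEnd ℂ) (ω z) * deriv ω z / ((1 - ‖ω z‖ ^ 2 : ℝ) : ℂ)) := by
      rw [logPreSch, hpre]; ring
    have hSP : ‖deriv ω z‖ * (1 - ‖z‖ ^ 2) ≤ 1 - ‖ω z‖ ^ 2 :=
      schwarz_pick hωdiff hωmap hz
    have hCnorm : ‖logPreSch h g ω z - preSch ψ z‖
        = ‖ω z‖ * ‖deriv ω z‖ / (1 - ‖ω z‖ ^ 2) := by
      rw [hdiffeq, norm_neg, norm_div, norm_mul, RCLike.norm_conj, Complex.norm_real,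
        Real.norm_of_nonneg hωpos.le]
    have hz2 : (0:ℝ) ≤ 1 - ‖z‖ ^ 2 := by nlinarith [norm_nonneg z]
    have key : (1 - ‖z‖ ^ 2) * ‖logPreSch h g ω z - preSch ψ z‖ ≤ 1 := by
      rw [hCnorm]
      have h1 : (1 - ‖z‖ ^ 2) * (‖ω z‖ * ‖deriv ω z‖ / (1 - ‖ω z‖ ^ 2))
          = ‖ω z‖ * ((‖deriv ω z‖ * (1 - ‖z‖ ^ 2)) / (1 - ‖ω z‖ ^ 2)) := by ring
      rw [h1]
      have h2 : (‖deriv ω z‖ * (1 - ‖z‖ ^ 2)) / (1 - ‖ω z‖ ^ 2) ≤ 1 :=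
        (div_le_one hωpos).mpr hSP
      calc ‖ω z‖ * ((‖deriv ω z‖ * (1 - ‖z‖ ^ 2)) / (1 - ‖ω z‖ ^ 2))
          ≤ ‖ω z‖ * 1 := by
            apply mul_le_mul_of_nonneg_left h2 (norm_nonneg _)
        _ ≤ 1 := by rw [mul_one]; exact hω1.le
    calc |(1 - ‖z‖ ^ 2) * ‖logPreSch h g ω z‖ - (1 - ‖z‖ ^ 2) * ‖preSch ψ z‖|
        = (1 - ‖z‖ ^ 2) * |‖logPreSch h g ω z‖ - ‖preSch ψ z‖| := by
          rw [← mul_sub, abs_mul, _root_.abs_of_nonneg hz2]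
      _ ≤ (1 - ‖z‖ ^ 2) * ‖logPreSch h g ω z - preSch ψ z‖ :=
          mul_le_mul_of_nonneg_left (abs_norm_sub_norm_le _ _) hz2
      _ ≤ 1 := key
  -- wrap up
  have huv : ∀ z ∈ unitDisk, (1 - ‖z‖ ^ 2) * ‖logPreSch h g ω z‖
      ≤ (1 - ‖z‖ ^ 2) * ‖preSch ψ z‖ + 1 := fun z hz => by
    have := hptw z hz; rw [abs_sub_le_iff] at this; linarith [this.1]
  have hvu : ∀ z ∈ unitDisk, (1 - ‖z‖ ^ 2) * ‖preSch ψ z‖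
      ≤ (1 - ‖z‖ ^ 2) * ‖logPreSch h g ω z‖ + 1 := fun z hz => by
    have := hptw z hz; rw [abs_sub_le_iff] at this; linarith [this.2]
  have hiff : BddAbove (normSet (logPreSch h g ω)) ↔ BddAbove (normSet (preSch ψ)) :=
    ⟨fun hb => aux_bddAbove hvu hb, fun hb => aux_bddAbove huv hb⟩
  refine ⟨hiff, fun hb => ?_⟩
  have hb' := hiff.mp hb
  rw [abs_sub_le_iff]
  constructor
  · have := aux_sSup huv hb'
    linarith
  · have := aux_sSup hvu hb
    linarith
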